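/- The formal power series F = Σ_{j≥0} V_j X^j over ℝ satisfies the functional equation X·F² + (X − 1)·F + 1 = 0 in the ring of formal power series ℝ[[X]]. -/

import Mathlib

/-- The generating power series F = Σ V_j X^j satisfies X F² + (X − 1) F + 1 = 0 in ℝ[[X]]. -/
theorem stmt_14 (V : ℕ → ℝ) (hV0 : V 0 = 1)
    (hVrec : ∀ j : ℕ, V (j + 1) = (∑ i ∈ Finset.range (j + 1), V i * V (j - i)) + V j) :
    PowerSeries.X * (PowerSeries.mk V) ^ 2
      + (PowerSeries.X - 1) * PowerSeries.mk V + 1 = (0 : PowerSeries ℝ) := by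
  ext n
  rcases n with _ | j
  · simp [hV0, sub_mul]
  · have h := hVrec j
    have h2 : (PowerSeries.coeff j) ((PowerSeries.mk V) ^ 2)
        = ∑ i ∈ Finset.range (j + 1), V i * V (j - i) := by
      rw [sq, PowerSeries.coeff_mul,
        Finset.Nat.sum_antidiagonal_eq_sum_range_succ_mk]
      simp
    simp only [map_add, map_zero, PowerSeries.coeff_succ_X_mul, sub_mul, one_mul, map_sub,
      PowerSeries.coeff_mk, PowerSeries.coeff_one, h2]
    simp only [Nat.succ_ne_zero, if_false]
    linarith
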